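/- Let 1/3 ≤ λ < 1/2 and let K_λ ⊂ ℝ^2 be the four corner Cantor set with contraction ratio λ, i.e. the attractor of the four maps f_j(x) = λx + (1−λ)c_j with c_j ∈ {(0,0), (1,0), (1,1), (0,1)}. Then for every θ ∈ S^1 \ {±(1,0), ±(0,1)}, the projection P_θ(K_λ) is a finite union of closed line segments of the line L_θ. -/

import Mathlib

open Metric Set
open scoped RealInnerProductSpace ENNReal

/-- Orthogonal projection onto the affine hyperplane through `y` orthogonal to the
unit vector `θ` (for `y = 0` this is the projection onto the hyperplane `L_θ`). -/
noncomputable def projH {d : ℕ} (θ y z : EuclideanSpace ℝ (Fin d)) : EuclideanSpace ℝ (Fin d) :=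
  z - ⟪z - y, θ⟫ • θ

/-- The affine hyperplane `L_{θ,y}` through `y` orthogonal to `θ`. -/
def affHyp {d : ℕ} (θ y : EuclideanSpace ℝ (Fin d)) : Set (EuclideanSpace ℝ (Fin d)) :=
  {x | ⟪x - y, θ⟫ = 0}

/-- The visible part of `F` from the hyperplane `L_{θ,y}`:
points `z ∈ F` such that the segment from `z` to its projection meets `F` only in `z`. -/
noncomputable def visible {d : ℕ} (θ y : EuclideanSpace ℝ (Fin d))
    (F : Set (EuclideanSpace ℝ (Fin d))) : Set (EuclideanSpace ℝ (Fin d)) :=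
  {z | z ∈ F ∧ segment ℝ z (projH θ y z) ∩ F = {z}}

/-- Interior of `A` relative to the hyperplane `L_θ` through the origin orthogonal to `θ`. -/
def relIntH {d : ℕ} (θ : EuclideanSpace ℝ (Fin d)) (A : Set (EuclideanSpace ℝ (Fin d))) :
    Set (EuclideanSpace ℝ (Fin d)) :=
  {x | x ∈ A ∧ ∃ ε > 0, ∀ z : EuclideanSpace ℝ (Fin d), ⟪z, θ⟫ = 0 → dist z x < ε → z ∈ A}

/-- The penetrable part of `F` in direction `θ`:
`Pen_θ(F) = F ∩ P_θ⁻¹(P_θ(F) \ Int(P_θ(F)))`. -/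
noncomputable def pen {d : ℕ} (θ : EuclideanSpace ℝ (Fin d))
    (F : Set (EuclideanSpace ℝ (Fin d))) : Set (EuclideanSpace ℝ (Fin d)) :=
  F ∩ projH θ 0 ⁻¹' (projH θ 0 '' F \ relIntH θ (projH θ 0 '' F))

/-- The Assouad dimension of a set: the infimum of all `s ≥ 0` such that for some `C > 0`,
for all `0 < r < R` and `x ∈ F`, the set `F ∩ B(x,R)` can be covered by at most
`C (R/r)^s` balls of radius `r`. -/
noncomputable def dimA {d : ℕ} (F : Set (EuclideanSpace ℝ (Fin d))) : ℝ≥0∞ :=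
  ⨅ (s : ℝ) (_ : 0 ≤ s) (_ : ∃ C : ℝ, 0 < C ∧ ∀ x ∈ F, ∀ r R : ℝ, 0 < r → r < R →
      ∃ t : Finset (EuclideanSpace ℝ (Fin d)),
        (t.card : ℝ) ≤ C * (R / r) ^ s ∧ F ∩ ball x R ⊆ ⋃ c ∈ t, ball c r),
    ENNReal.ofReal s

/-- Least number of balls of radius `r` needed to cover `F`. -/
noncomputable def coverN {d : ℕ} (F : Set (EuclideanSpace ℝ (Fin d))) (r : ℝ) : ℕ :=
  sInf {n : ℕ | ∃ t : Finset (EuclideanSpace ℝ (Fin d)), t.card = n ∧ F ⊆ ⋃ c ∈ t, ball c r}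

/-- The upper box-counting dimension of a set. -/
noncomputable def udimB {d : ℕ} (F : Set (EuclideanSpace ℝ (Fin d))) : ℝ≥0∞ :=
  Filter.limsup (fun r : ℝ => ENNReal.ofReal (Real.log (coverN F r) / Real.log (1 / r)))
    (nhdsWithin 0 (Set.Ioi 0))

open Filter Pointwise


namespace FC

/-- set of sums `∑ l^k t k` with digits in `T` -/
noncomputable def sumT (l : ℝ) (T : Set ℝ) : Set ℝ :=
  {x | ∃ t : ℕ → ℝ, (∀ k, t k ∈ T) ∧ HasSum (fun k => l ^ k * t k) x}

variable {l : ℝ}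

lemma summable_aux (hl0 : 0 < l) (hl1 : l < 1) {t : ℕ → ℝ} {m : ℝ}
    (ht : ∀ k, |t k| ≤ m) : Summable (fun k => l ^ k * t k) := by
  refine Summable.of_norm_bounded (g := fun k => l ^ k * m)
    (((summable_geometric_of_lt_one hl0.le hl1)).mul_right m) (fun k => ?_)
  rw [Real.norm_eq_abs, abs_mul, abs_pow, abs_of_pos hl0]
  exact mul_le_mul_of_nonneg_left (ht k) (pow_nonneg hl0.le k)

lemma sub_sumT (hl0 : 0 < l) (hl1 : l < 1) {A T : Set ℝ} {R m : ℝ}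
    (hA : ∀ y ∈ A, |y| ≤ R) (hT : ∀ t ∈ T, |t| ≤ m)
    (hstep : ∀ y ∈ A, ∃ t ∈ T, ∃ z ∈ A, y = l * z + t) :
    A ⊆ sumT l T := by
  intro x hx
  have hstep' : ∀ y : A, ∃ z : A, ∃ t, t ∈ T ∧ (y : ℝ) = l * z + t := by
    rintro ⟨y, hy⟩
    obtain ⟨t, htT, z, hz, hyz⟩ := hstep y hy
    exact ⟨⟨z, hz⟩, t, htT, hyz⟩
  choose g tf htf heq using hstep'
  set u : ℕ → A := fun n => g^[n] ⟨x, hx⟩ with hu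
  have hu' : ∀ n, u (n + 1) = g (u n) := fun n => Function.iterate_succ_apply' g n _
  set t : ℕ → ℝ := fun n => tf (u n) with htdef
  have ht : ∀ n, t n ∈ T := fun n => htf (u n)
  have hrec : ∀ n, (u n : ℝ) = l * (u (n + 1)) + t n := by
    intro n; rw [hu' n]; exact heq (u n)
  have hpart : ∀ n, (∑ k ∈ Finset.range n, l ^ k * t k) = x - l ^ n * (u n) := by
    intro n
    induction n with
    | zero => simp [hu]
    | succ n ihn =>
      rw [Finset.sum_range_succ, ihn]
      have h := hrec n
      linear_combination (-(l ^ n)) * h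
  have hsm : Summable (fun k => l ^ k * t k) :=
    summable_aux hl0 hl1 (fun k => hT _ (ht k))
  refine ⟨t, ht, hsm.hasSum_iff_tendsto_nat.mpr ?_⟩
  simp only [hpart]
  have h0 : Tendsto (fun n => l ^ n * ((u n : ℝ))) atTop (nhds 0) := by
    refine squeeze_zero_norm (a := fun n => l ^ n * R) ?_ ?_

    · intro n
      rw [Real.norm_eq_abs, abs_mul, abs_pow, abs_of_pos hl0]
      exact mul_le_mul_of_nonneg_left (hA _ (u n).2) (pow_nonneg hl0.le n)
    · simpa using (tendsto_pow_atTop_nhds_zero_of_lt_one hl0.le hl1).mul_const R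
  simpa using tendsto_const_nhds.sub h0

lemma sumT_sub (hl0 : 0 < l) (hl1 : l < 1) {S T : Set ℝ}
    (hSne : S.Nonempty) (hScl : IsClosed S)
    (hsub : ∀ t ∈ T, ∀ z ∈ S, l * z + t ∈ S) :
    sumT l T ⊆ S := by
  rintro x ⟨t, ht, hsum⟩
  obtain ⟨y0, hy0⟩ := hSne
  have key : ∀ n (t : ℕ → ℝ), (∀ k, t k ∈ T) →
      (∑ k ∈ Finset.range n, l ^ k * t k) + l ^ n * y0 ∈ S := by
    intro n
    induction n with
    | zero => intro t ht; simpa using hy0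
    | succ n ihn =>
      intro t ht
      have h1 := ihn (fun k => t (k + 1)) (fun k => ht (k + 1))
      have h2 := hsub (t 0) (ht 0) _ h1
      have e3 : (∑ k ∈ Finset.range (n+1), l ^ k * t k) + l ^ (n+1) * y0
          = l * ((∑ k ∈ Finset.range n, l ^ k * t (k + 1)) + l ^ n * y0) + t 0 := by
        rw [Finset.sum_range_succ' (fun k => l ^ k * t k) n, mul_add, Finset.mul_sum]
        rw [Finset.sum_congr rfl (fun k _ => show l ^ (k+1) * t (k+1) = l * (l ^ k * t (k+1)) by ring)]
        ring
      rw [e3]; exact h2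
  have hz : Tendsto (fun n => (∑ k ∈ Finset.range n, l ^ k * t k) + l ^ n * y0)
      atTop (nhds x) := by
    have h1 := hsum.tendsto_sum_nat
    have h2 : Tendsto (fun n : ℕ => l ^ n * y0) atTop (nhds 0) := by
      simpa using (tendsto_pow_atTop_nhds_zero_of_lt_one hl0.le hl1).mul_const y0
    simpa using h1.add h2
  exact hScl.mem_of_tendsto hz (Filter.Eventually.of_forall (fun n => key n t ht))

lemma sumT_subset_Icc (hl0 : 0 < l) (hl1 : l < 1) {T : Set ℝ} {m : ℝ}
    (hT : T ⊆ Icc 0 m) : sumT l T ⊆ Icc 0 (m / (1 - l)) := by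
  rintro x ⟨t, ht, hs⟩
  constructor
  · exact hasSum_le (fun k => mul_nonneg (pow_nonneg hl0.le k) (hT (ht k)).1)
      hasSum_zero hs
  · have hg : HasSum (fun k => l ^ k * m) ((1 - l)⁻¹ * m) :=
      (hasSum_geometric_of_lt_one hl0.le hl1).mul_right m
    have := hasSum_le (fun k =>
      mul_le_mul_of_nonneg_left (hT (ht k)).2 (pow_nonneg hl0.le k)) hs hg
    rwa [div_eq_inv_mul]

lemma sumT_eq_Icc (hl0 : 0 < l) (hl1 : l < 1) {T : Set ℝ} {m : ℝ} (hm : 0 ≤ m)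
    (hT : T ⊆ Icc 0 m)
    (hcov : ∀ x, 0 ≤ x → x ≤ m / (1 - l) → ∃ t ∈ T, t ≤ x ∧ x ≤ t + l * (m / (1 - l))) :
    sumT l T = Icc 0 (m / (1 - l)) := by
  have h1l : (0:ℝ) < 1 - l := by linarith
  refine Subset.antisymm (sumT_subset_Icc hl0 hl1 hT) ?_
  refine sub_sumT hl0 hl1 (R := m / (1 - l)) (m := m)
    (fun y hy => abs_le.mpr ⟨by linarith [hy.1, div_nonneg hm h1l.le], hy.2⟩)
    (fun t htT => abs_le.mpr ⟨by linarith [(hT htT).1], (hT htT).2⟩) ?_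
  intro y hy
  obtain ⟨t, htT, h1, h2⟩ := hcov y hy.1 hy.2
  refine ⟨t, htT, (y - t) / l, ⟨div_nonneg (by linarith) hl0.le, ?_⟩, by field_simp; ring⟩
  rw [div_le_iff₀ hl0]
  nlinarith

lemma summable_auxB (hl0 : 0 < l) (hl1 : l < 1) {t : ℕ → ℝ} {m : ℝ}
    (ht : ∀ k, |t k| ≤ m) : Summable (fun k => l ^ k * t k) := by
  refine Summable.of_norm_bounded (g := fun k => l ^ k * m)
    (((summable_geometric_of_lt_one hl0.le hl1)).mul_right m) (fun k => ?_)
  rw [Real.norm_eq_abs, abs_mul, abs_pow, abs_of_pos hl0]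
  exact mul_le_mul_of_nonneg_left (ht k) (pow_nonneg hl0.le k)

lemma mem_pair_abs {a x : ℝ} (hx : x ∈ ({0, a} : Set ℝ)) : |x| ≤ |a| := by
  rcases hx with rfl | hx
  · simp
  · rw [mem_singleton_iff] at hx; rw [hx]

/-- Minkowski sum decomposition. -/
lemma sumT_pair_add (hl0 : 0 < l) (hl1 : l < 1) (a b : ℝ) :
    sumT l {0, a, b, a + b} = sumT l {0, a} + sumT l {0, b} := by
  apply Set.Subset.antisymm
  · rintro x ⟨t, ht, hs⟩
    have hdec : ∀ k, ∃ u v : ℝ, u ∈ ({0, a} : Set ℝ) ∧ v ∈ ({0, b} : Set ℝ) ∧ t k = u + v := by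
      intro k
      rcases ht k with h | h | h | h
      · exact ⟨0, 0, by simp, by simp, by rw [h]; ring⟩
      · exact ⟨a, 0, by simp, by simp, by rw [h]; ring⟩
      · exact ⟨0, b, by simp, by simp, by rw [h]; ring⟩
      · rw [mem_singleton_iff] at h; exact ⟨a, b, by simp, by simp, h⟩
    choose u v hu hv huv using hdec
    have hsu : Summable (fun k => l ^ k * u k) :=
      summable_auxB hl0 hl1 (fun k => mem_pair_abs (hu k))
    have hsv : Summable (fun k => l ^ k * v k) :=
      summable_auxB hl0 hl1 (fun k => mem_pair_abs (hv k))
    obtain ⟨y1, hy1⟩ := hsu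
    obtain ⟨y2, hy2⟩ := hsv
    have hsum2 : HasSum (fun k => l ^ k * t k) (y1 + y2) := by
      have := hy1.add hy2
      convert this using 2 with k
      rw [huv k]; ring
    exact ⟨y1, ⟨u, hu, hy1⟩, y2, ⟨v, hv, hy2⟩, (hs.unique hsum2).symm⟩
  · rintro x ⟨x1, ⟨t1, ht1, hs1⟩, x2, ⟨t2, ht2, hs2⟩, rfl⟩
    refine ⟨fun k => t1 k + t2 k, fun k => ?_, ?_⟩
    · have h1 : t1 k = 0 ∨ t1 k = a := by simpa [mem_insert_iff, mem_singleton_iff] using ht1 k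
      have h2 : t2 k = 0 ∨ t2 k = b := by simpa [mem_insert_iff, mem_singleton_iff] using ht2 k
      simp only [mem_insert_iff, mem_singleton_iff]
      rcases h1 with h1 | h1 <;> rcases h2 with h2 | h2
      · left; rw [h1, h2]; ring
      · right; right; left; rw [h1, h2]; ring
      · right; left; rw [h1, h2]; ring
      · right; right; right; rw [h1, h2]
    · have := hs1.add hs2
      convert this using 2 with k
      ring

/-- one-level splitting of a two-digit Cantor set. -/
lemma sumT_split (hl0 : 0 < l) (hl1 : l < 1) (b : ℝ) :
    sumT l {0, b} = sumT l {0, l * b} ∪ ((· + b) '' sumT l {0, l * b}) := by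
  apply Set.Subset.antisymm
  · rintro x ⟨t, ht, hs⟩
    have htail : HasSum (fun n => l ^ n * (l * t (n + 1))) (x - t 0) := by
      have h1 : HasSum (fun n => l ^ (n + 1) * t (n + 1)) (x - t 0) := by
        rw [hasSum_nat_add_iff (f := fun k => l ^ k * t k) 1]
        simpa using hs
      convert h1 using 2 with n
      ring
    have hmemtail : (x - t 0) ∈ sumT l {0, l * b} := by
      refine ⟨fun n => l * t (n + 1), fun n => ?_, htail⟩
      rcases ht (n + 1) with h | h
      · left; show l * t (n + 1) = 0; rw [h, mul_zero]
      · rw [mem_singleton_iff] at h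
        right; show l * t (n + 1) = l * b; rw [h]
    rcases ht 0 with h | h
    · left; have h' := hmemtail; rw [h, sub_zero] at h'; exact h'
    · rw [mem_singleton_iff] at h
      right
      exact ⟨x - t 0, hmemtail, by rw [h]; ring⟩
  · have key : ∀ t0 ∈ ({0, b} : Set ℝ), ∀ x ∈ sumT l {0, l * b},
        x + t0 ∈ sumT l {0, b} := by
      rintro t0 ht0 x ⟨t, ht, hs⟩
      have hd : ∀ n, ∃ d ∈ ({0, b} : Set ℝ), t n = l * d := by
        intro n
        rcases ht n with h | h
        · exact ⟨0, by simp, by rw [h, mul_zero]⟩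
        · rw [mem_singleton_iff] at h; exact ⟨b, by simp, h⟩
      choose d hd1 hd2 using hd
      set t' : ℕ → ℝ := fun k => if k = 0 then t0 else d (k - 1) with ht'
      refine ⟨t', fun k => ?_, ?_⟩
      · rcases k with _ | k
        · simpa [ht'] using ht0
        · simpa [ht'] using hd1 k
      · have h1 : HasSum (fun n => l ^ (n + 1) * t' (n + 1)) x := by
          have he : (fun n => l ^ (n + 1) * t' (n + 1)) = fun n => l ^ n * t n := by
            funext n
            have hb : t' (n + 1) = d n := by simp [ht']
            rw [hb, hd2 n]; ring
          rw [he]; exact hs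
        have h2 := (hasSum_nat_add_iff (f := fun n => l ^ n * t' n) 1).mp h1
        have h3 : t' 0 = t0 := by simp [ht']
        simpa [h3] using h2
    rintro x (hx | ⟨y, hy, rfl⟩)
    · simpa using key 0 (by simp) x hx
    · exact key b (by simp) y hy

/-- translation of the digit set by a constant. -/
lemma sumT_shiftC (hl0 : 0 < l) (hl1 : l < 1) (c : ℝ) (T : Set ℝ) :
    sumT l ((· + c) '' T) = (· + (1 - l)⁻¹ * c) '' sumT l T := by
  have hgc : HasSum (fun k => l ^ k * c) ((1 - l)⁻¹ * c) :=
    (hasSum_geometric_of_lt_one hl0.le hl1).mul_right c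
  apply Set.Subset.antisymm
  · rintro x ⟨t, ht, hs⟩
    have hd : ∀ n, ∃ s ∈ T, t n = s + c := by
      intro n
      obtain ⟨s, hsT, hsc⟩ := ht n
      exact ⟨s, hsT, hsc.symm⟩
    choose s hs1 hs2 using hd
    have h1 : HasSum (fun k => l ^ k * s k) (x - (1 - l)⁻¹ * c) := by
      have := hs.sub hgc
      have e : (fun k => l ^ k * s k) = fun b => l ^ b * t b - l ^ b * c := by
        funext k; rw [hs2 k]; ring
      rw [e]; exact this
    exact ⟨x - (1 - l)⁻¹ * c, ⟨s, hs1, h1⟩, by ring⟩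
  · rintro x ⟨y, ⟨t, ht, hs⟩, rfl⟩
    refine ⟨fun k => t k + c, fun k => ⟨t k, ht k, rfl⟩, ?_⟩
    have := hs.add hgc
    convert this using 2 with k
    ring

/-- finite union of nondegenerate closed intervals -/
def Rep (A : Set ℝ) : Prop :=
  ∃ (N : ℕ) (a b : Fin N → ℝ), (∀ j, a j < b j) ∧ A = ⋃ j, Icc (a j) (b j)

lemma Rep.union {A B : Set ℝ} (hA : Rep A) (hB : Rep B) : Rep (A ∪ B) := by
  obtain ⟨N1, a1, b1, h1, e1⟩ := hA
  obtain ⟨N2, a2, b2, h2, e2⟩ := hB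
  refine ⟨N1 + N2, Fin.addCases a1 a2, Fin.addCases b1 b2, ?_, ?_⟩
  · intro j
    refine Fin.addCases (fun i => ?_) (fun i => ?_) j
    · simpa using h1 i
    · simpa using h2 i
  · rw [e1, e2]
    ext x
    simp only [mem_union, mem_iUnion]
    constructor
    · rintro (⟨i, hi⟩ | ⟨i, hi⟩)
      · exact ⟨Fin.castAdd N2 i, by simpa using hi⟩
      · exact ⟨Fin.natAdd N1 i, by simpa using hi⟩
    · rintro ⟨j, hj⟩
      revert hj
      refine Fin.addCases (fun i => ?_) (fun i => ?_) j <;> intro hj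
      · exact Or.inl ⟨i, by simpa using hj⟩
      · exact Or.inr ⟨i, by simpa using hj⟩

lemma Rep.translate {A : Set ℝ} (hA : Rep A) (c : ℝ) : Rep ((· + c) '' A) := by
  obtain ⟨N, a, b, h, e⟩ := hA
  refine ⟨N, fun j => a j + c, fun j => b j + c, fun j => by show a j + c < b j + c; linarith [h j], ?_⟩
  rw [e, image_iUnion]
  refine iUnion_congr fun j => ?_
  ext x
  simp only [mem_image, mem_Icc]
  constructor
  · rintro ⟨y, hy, rfl⟩; exact ⟨by linarith [hy.1], by linarith [hy.2]⟩
  · rintro ⟨h1, h2⟩; exact ⟨x - c, ⟨by linarith, by linarith⟩, by ring⟩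


lemma base (hl : 1/3 ≤ l) (hl' : l < 1/2) {a b : ℝ} (ha : 0 < a) (hab : a ≤ b)
    (hba : (1 - 2*l) * b ≤ a) :
    sumT l {0, a, b, a + b} = Icc 0 ((a + b) / (1 - l)) := by
  have hl0 : 0 < l := by linarith
  have hl1 : l < 1 := by linarith
  have h1l : (0:ℝ) < 1 - l := by linarith
  have hb : 0 < b := lt_of_lt_of_le ha hab
  refine sumT_eq_Icc hl0 hl1 (by linarith) ?_ ?_
  · intro t ht
    have ht' : t = 0 ∨ t = a ∨ t = b ∨ t = a + b := by simpa using ht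
    rcases ht' with rfl | rfl | rfl | rfl <;> exact ⟨by linarith, by linarith⟩
  · intro x hx0 hxM
    set M := (a + b) / (1 - l) with hM
    have hMeq : (1 - l) * M = a + b := by
      rw [hM]; field_simp
    clear_value M
    have haM : a ≤ l * M := by
      have h2 : (1 - l) * a ≤ (1 - l) * (l * M) := by
        have h3 : (1 - l) * (l * M) = l * (a + b) := by
          rw [← hMeq]; ring
        rw [h3]
        nlinarith [mul_nonneg (show (0:ℝ) ≤ 3*l - 1 by linarith) ha.le,
          mul_le_mul_of_nonneg_left hab hl0.le]
      exact le_of_mul_le_mul_left h2 h1l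
    have hbM : b ≤ a + l * M := by
      have h3 : (1 - l) * (l * M) = l * (a + b) := by rw [← hMeq]; ring
      have h2 : (1 - l) * b ≤ (1 - l) * (a + l * M) := by
        rw [mul_add, h3]; nlinarith [hba]
      exact le_of_mul_le_mul_left h2 h1l
    rcases le_or_gt x (l * M) with hc | hc
    · exact ⟨0, by simp, hx0, by linarith⟩
    rcases le_or_gt x (a + l * M) with hc2 | hc2
    · exact ⟨a, by simp, by linarith, by linarith⟩
    rcases le_or_gt x (b + l * M) with hc3 | hc3
    · exact ⟨b, by simp, by linarith, by linarith⟩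
    · refine ⟨a + b, by simp, by linarith, ?_⟩
      have hMM : M = (a + b) + l * M := by linear_combination hMeq
      linarith

lemma rep_base (hl : 1/3 ≤ l) (hl' : l < 1/2) {a b : ℝ} (ha : 0 < a) (hab : a ≤ b)
    (hba : (1 - 2*l) * b ≤ a) : Rep (sumT l {0, a, b, a + b}) := by
  refine ⟨1, fun _ => 0, fun _ => (a + b) / (1 - l),
    fun _ => div_pos (by linarith) (by linarith), ?_⟩
  rw [base hl hl' ha hab hba]
  exact (iUnion_const _).symm

lemma main_ind (hl : 1/3 ≤ l) (hl' : l < 1/2) :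
    ∀ n : ℕ, ∀ a b : ℝ, 0 < a → a ≤ b → l ^ n * ((1 - 2*l) * b) ≤ a →
      Rep (sumT l {0, a, b, a + b}) := by
  intro n
  induction n with
  | zero => intro a b ha hab h; exact rep_base hl hl' ha hab (by simpa using h)
  | succ n ih =>
    intro a b ha hab h
    rcases le_or_gt ((1 - 2*l) * b) a with hc | hc
    · exact rep_base hl hl' ha hab hc
    have hl0 : 0 < l := by linarith
    have hl1 : l < 1 := by linarith
    have hb : 0 < b := lt_of_lt_of_le ha hab
    have halb : a ≤ l * b := by
      nlinarith [hc, mul_le_mul_of_nonneg_right (show 1 - 2*l ≤ l by linarith) hb.le]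
    have hih : Rep (sumT l {0, a, l * b, a + l * b}) := by
      refine ih a (l * b) ha halb ?_
      have he : l ^ n * ((1 - 2*l) * (l * b)) = l ^ (n + 1) * ((1 - 2*l) * b) := by ring
      rw [he]; exact h
    have heq : sumT l {0, a, b, a + b}
        = sumT l {0, a, l * b, a + l * b} ∪
          ((· + b) '' sumT l {0, a, l * b, a + l * b}) := by
      calc sumT l {0, a, b, a + b} = sumT l {0, a} + sumT l {0, b} :=
            sumT_pair_add hl0 hl1 a b
        _ = sumT l {0, a} + (sumT l {0, l * b} ∪ ((· + b) '' sumT l {0, l * b})) := by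
            rw [← sumT_split hl0 hl1 b]
        _ = (sumT l {0, a} + sumT l {0, l * b}) ∪
            (sumT l {0, a} + ((· + b) '' sumT l {0, l * b})) := Set.add_union
        _ = (sumT l {0, a} + sumT l {0, l * b}) ∪
            ((· + b) '' (sumT l {0, a} + sumT l {0, l * b})) := by
            rw [show sumT l {0, a} + ((· + b) '' sumT l {0, l * b})
                = (· + b) '' (sumT l {0, a} + sumT l {0, l * b}) by
              rw [← Set.add_singleton, ← Set.add_singleton, ← add_assoc]]
        _ = sumT l {0, a, l * b, a + l * b} ∪
            ((· + b) '' sumT l {0, a, l * b, a + l * b}) := by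
            rw [sumT_pair_add hl0 hl1 a (l * b)]
    rw [heq]
    exact hih.union (hih.translate b)

lemma sumT_abs (hl0 : 0 < l) (hl1 : l < 1) (α β : ℝ) :
    ∃ c₀ : ℝ, sumT l {0, α, β, α + β} = (· + c₀) '' sumT l {0, |α|, |β|, |α| + |β|} := by
  rcases abs_cases α with ⟨h1, h2⟩ | ⟨h1, h2⟩ <;>
    rcases abs_cases β with ⟨h3, h4⟩ | ⟨h3, h4⟩ <;> rw [h1, h3]
  · exact ⟨0, by simp⟩
  · -- α ≥ 0, β < 0 : shift by β
    have hset : ({0, α, β, α + β} : Set ℝ) = (· + β) '' {0, α, -β, α + -β} := by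
      ext x
      simp only [mem_image, mem_insert_iff, mem_singleton_iff]
      constructor
      · rintro (h | h | h | h)
        · exact ⟨-β, Or.inr (Or.inr (Or.inl rfl)), by subst h; ring⟩
        · exact ⟨α + -β, Or.inr (Or.inr (Or.inr rfl)), by subst h; ring⟩
        · exact ⟨0, Or.inl rfl, by subst h; ring⟩
        · exact ⟨α, Or.inr (Or.inl rfl), by subst h; ring⟩
      · rintro ⟨w, (rfl | rfl | rfl | rfl), rfl⟩
        · exact Or.inr (Or.inr (Or.inl (by ring)))
        · exact Or.inr (Or.inr (Or.inr (by ring)))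
        · exact Or.inl (by ring)
        · exact Or.inr (Or.inl (by ring))
    refine ⟨(1 - l)⁻¹ * β, ?_⟩
    rw [hset, sumT_shiftC hl0 hl1]
  · -- α < 0, β ≥ 0 : shift by α
    have hset : ({0, α, β, α + β} : Set ℝ) = (· + α) '' {0, -α, β, -α + β} := by
      ext x
      simp only [mem_image, mem_insert_iff, mem_singleton_iff]
      constructor
      · rintro (h | h | h | h)
        · exact ⟨-α, Or.inr (Or.inl rfl), by subst h; ring⟩
        · exact ⟨0, Or.inl rfl, by subst h; ring⟩
        · exact ⟨-α + β, Or.inr (Or.inr (Or.inr rfl)), by subst h; ring⟩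
        · exact ⟨β, Or.inr (Or.inr (Or.inl rfl)), by subst h; ring⟩
      · rintro ⟨w, (rfl | rfl | rfl | rfl), rfl⟩
        · exact Or.inr (Or.inl (by ring))
        · exact Or.inl (by ring)
        · exact Or.inr (Or.inr (Or.inr (by ring)))
        · exact Or.inr (Or.inr (Or.inl (by ring)))
    refine ⟨(1 - l)⁻¹ * α, ?_⟩
    rw [hset, sumT_shiftC hl0 hl1]
  · -- both negative : shift by α + β
    have hset : ({0, α, β, α + β} : Set ℝ) = (· + (α + β)) '' {0, -α, -β, -α + -β} := by
      ext x
      simp only [mem_image, mem_insert_iff, mem_singleton_iff]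
      constructor
      · rintro (h | h | h | h)
        · exact ⟨-α + -β, Or.inr (Or.inr (Or.inr rfl)), by subst h; ring⟩
        · exact ⟨-β, Or.inr (Or.inr (Or.inl rfl)), by subst h; ring⟩
        · exact ⟨-α, Or.inr (Or.inl rfl), by subst h; ring⟩
        · exact ⟨0, Or.inl rfl, by subst h; ring⟩
      · rintro ⟨w, (rfl | rfl | rfl | rfl), rfl⟩
        · exact Or.inr (Or.inr (Or.inr (by ring)))
        · exact Or.inr (Or.inr (Or.inl (by ring)))
        · exact Or.inr (Or.inl (by ring))
        · exact Or.inl (by ring)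
    refine ⟨(1 - l)⁻¹ * (α + β), ?_⟩
    rw [hset, sumT_shiftC hl0 hl1]

lemma rep_pos (hl : 1/3 ≤ l) (hl' : l < 1/2) {p q : ℝ} (hp : 0 < p) (hq : 0 < q)
    (hpq : p ≤ q) : Rep (sumT l {0, p, q, p + q}) := by
  have hl0 : 0 < l := by linarith
  have hl1 : l < 1 := by linarith
  have hq' : 0 < (1 - 2*l) * q := mul_pos (by linarith) hq
  obtain ⟨n, hn⟩ := exists_pow_lt_of_lt_one (div_pos hp hq') hl1
  refine main_ind hl hl' n p q hp hpq ?_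
  have := (lt_div_iff₀ hq').mp hn
  linarith

lemma rep_sumT4 (hl : 1/3 ≤ l) (hl' : l < 1/2) {α β : ℝ} (hα : α ≠ 0) (hβ : β ≠ 0) :
    Rep (sumT l {0, α, β, α + β}) := by
  have hl0 : 0 < l := by linarith
  have hl1 : l < 1 := by linarith
  obtain ⟨c₀, hc₀⟩ := sumT_abs hl0 hl1 α β
  rw [hc₀]
  have hα' : 0 < |α| := abs_pos.mpr hα
  have hβ' : 0 < |β| := abs_pos.mpr hβ
  have hrep : Rep (sumT l {0, |α|, |β|, |α| + |β|}) := by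
    rcases le_total (|α|) (|β|) with hle | hle
    · exact rep_pos hl hl' hα' hβ' hle
    · have hsw : ({0, |α|, |β|, |α| + |β|} : Set ℝ) = {0, |β|, |α|, |β| + |α|} := by
        rw [Set.insert_comm (|α|) (|β|), add_comm]
      rw [hsw]
      exact rep_pos hl hl' hβ' hα' hle
  exact hrep.translate c₀

end FC

/-- For the four corner Cantor set with contraction ratio `λ ∈ [1/3, 1/2)` and every
direction `θ ∈ S¹` other than `±(1,0), ±(0,1)`, the projection `P_θ(K_λ)` is a finite
union of (nondegenerate) closed line segments. -/
theorem stmt15 (l : ℝ) (hl : 1/3 ≤ l) (hl' : l < 1/2)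
    (c : Fin 4 → EuclideanSpace ℝ (Fin 2))
    (hc : c = ![!₂[0, 0], !₂[1, 0], !₂[1, 1], !₂[0, 1]])
    (f : Fin 4 → EuclideanSpace ℝ (Fin 2) → EuclideanSpace ℝ (Fin 2))
    (hf : ∀ j x, f j x = l • x + (1 - l) • c j)
    (K : Set (EuclideanSpace ℝ (Fin 2)))
    (hKc : IsCompact K) (hKne : K.Nonempty)
    (hattr : K = ⋃ j, f j '' K)
    (θ : EuclideanSpace ℝ (Fin 2)) (hθ : ‖θ‖ = 1)
    (hθ1 : θ ≠ !₂[1, 0]) (hθ2 : θ ≠ !₂[-1, 0]) (hθ3 : θ ≠ !₂[0, 1]) (hθ4 : θ ≠ !₂[0, -1]) :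
    ∃ (n : ℕ) (a b : Fin n → EuclideanSpace ℝ (Fin 2)),
      (∀ j, a j ≠ b j) ∧ projH θ 0 '' K = ⋃ j, segment ℝ (a j) (b j) := by
  have hl0 : (0:ℝ) < l := by linarith
  have hl1 : l < 1 := by linarith
  have hnorm : θ 0 ^ 2 + θ 1 ^ 2 = 1 := by
    have h2 : Real.sqrt (∑ i : Fin 2, ‖θ i‖ ^ 2) = 1 := by
      rw [← EuclideanSpace.norm_eq]; exact hθ
    have h3 : (∑ i : Fin 2, ‖θ i‖ ^ 2) = 1 := Real.sqrt_eq_one.mp h2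
    simpa [Fin.sum_univ_two, Real.norm_eq_abs, sq_abs] using h3
  have hcoord : ∀ u v : ℝ, θ 0 = u → θ 1 = v → θ = !₂[u, v] := by
    intro u v h0 h1
    ext i
    fin_cases i <;> simp [← h0, ← h1]
  have hθ0 : θ 0 ≠ 0 := by
    intro h0
    have h11 : θ 1 * θ 1 = 1 := by nlinarith
    rcases mul_self_eq_one_iff.mp h11 with h | h
    · exact hθ3 (hcoord 0 1 h0 h)
    · exact hθ4 (hcoord 0 (-1) h0 h)
  have hθ1' : θ 1 ≠ 0 := by
    intro h1
    have h11 : θ 0 * θ 0 = 1 := by nlinarith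
    rcases mul_self_eq_one_iff.mp h11 with h | h
    · exact hθ1 (hcoord 1 0 h h1)
    · exact hθ2 (hcoord (-1) 0 h h1)
  set e : EuclideanSpace ℝ (Fin 2) := !₂[-(θ 1), θ 0] with he
  have he0 : e 0 = -(θ 1) := rfl
  have he1 : e 1 = θ 0 := rfl
  have hene : e ≠ 0 := by
    intro h
    exact hθ0 (by rw [← he1, h]; rfl)
  set L : EuclideanSpace ℝ (Fin 2) → ℝ := fun z => θ 0 * z 1 - θ 1 * z 0 with hLdef
  have hproj : ∀ z, projH θ 0 z = L z • e := by
    intro z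
    ext i
    have hinner : ⟪z - 0, θ⟫ = z 0 * θ 0 + z 1 * θ 1 := by
      simp [PiLp.inner_apply, RCLike.inner_apply, Fin.sum_univ_two]; ring
    fin_cases i
    · show z 0 - ⟪z - 0, θ⟫ * θ 0 = L z * e 0
      rw [hinner, he0, hLdef]
      linear_combination (- z 0) * hnorm
    · show z 1 - ⟪z - 0, θ⟫ * θ 1 = L z * e 1
      rw [hinner, he1, hLdef]
      linear_combination (- z 1) * hnorm
  have hLf : ∀ j x, L (f j x) = l * L x + (1 - l) * L (c j) := by
    intro j x
    rw [hf]
    show θ 0 * (l • x + (1 - l) • c j) 1 - θ 1 * (l • x + (1 - l) • c j) 0 = _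
    have ha1 : (l • x + (1 - l) • c j) 1 = l * x 1 + (1 - l) * (c j) 1 := rfl
    have ha0 : (l • x + (1 - l) • c j) 0 = l * x 0 + (1 - l) * (c j) 0 := rfl
    rw [ha1, ha0, hLdef]
    ring
  set α : ℝ := -((1 - l) * θ 1) with hαdef
  set β : ℝ := (1 - l) * θ 0 with hβdef
  have hα : α ≠ 0 := by
    simp only [hαdef, neg_ne_zero]
    exact mul_ne_zero (by linarith) hθ1'
  have hβ : β ≠ 0 := mul_ne_zero (by linarith) hθ0
  have hvals : (1 - l) * L (c 0) = 0 ∧ (1 - l) * L (c 1) = α ∧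
      (1 - l) * L (c 2) = α + β ∧ (1 - l) * L (c 3) = β := by
    subst hc
    refine ⟨?_, ?_, ?_, ?_⟩ <;> (simp [hLdef, hαdef, hβdef]; try ring)
  have hdig : ∀ j : Fin 4, (1 - l) * L (c j) ∈ ({0, α, β, α + β} : Set ℝ) := by
    intro j
    fin_cases j
    · show (1 - l) * L (c 0) ∈ ({0, α, β, α + β} : Set ℝ)
      rw [hvals.1]; exact Or.inl rfl
    · show (1 - l) * L (c 1) ∈ ({0, α, β, α + β} : Set ℝ)
      rw [hvals.2.1]; exact Or.inr (Or.inl rfl)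
    · show (1 - l) * L (c 2) ∈ ({0, α, β, α + β} : Set ℝ)
      rw [hvals.2.2.1]; exact Or.inr (Or.inr (Or.inr rfl))
    · show (1 - l) * L (c 3) ∈ ({0, α, β, α + β} : Set ℝ)
      rw [hvals.2.2.2]; exact Or.inr (Or.inr (Or.inl rfl))
  set S : Set ℝ := L '' K with hSdef
  have hLcont : Continuous L := by
    apply Continuous.sub
    · exact continuous_const.mul ((EuclideanSpace.proj (1 : Fin 2)).continuous)
    · exact continuous_const.mul ((EuclideanSpace.proj (0 : Fin 2)).continuous)
  have hScomp : IsCompact S := hKc.image hLcont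
  obtain ⟨R, hR⟩ := isBounded_iff_forall_norm_le.mp hScomp.isBounded
  have hTbd : ∀ t ∈ ({0, α, β, α + β} : Set ℝ), |t| ≤ |α| + |β| := by
    intro t ht
    have ht' : t = 0 ∨ t = α ∨ t = β ∨ t = α + β := by simpa using ht
    rcases ht' with rfl | rfl | rfl | rfl
    · simp [abs_nonneg]
      positivity
    · simpa using le_add_of_nonneg_right (abs_nonneg β)
    · simpa using le_add_of_nonneg_left (abs_nonneg α)
    · exact abs_add_le α β
  have hS1 : S ⊆ FC.sumT l {0, α, β, α + β} := by
    refine FC.sub_sumT hl0 hl1 (fun y hy => by simpa using hR y hy) hTbd ?_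
    rintro y ⟨x, hxK, rfl⟩
    rw [hattr] at hxK
    simp only [mem_iUnion] at hxK
    obtain ⟨j, hj⟩ := hxK
    obtain ⟨x', hx', rfl⟩ := hj
    exact ⟨(1 - l) * L (c j), hdig j, L x', ⟨x', hx', rfl⟩, by rw [hLf]⟩
  have hmemf : ∀ (j : Fin 4) (z : ℝ), z ∈ S → l * z + (1 - l) * L (c j) ∈ S := by
    intro j z hz
    obtain ⟨x', hx', rfl⟩ := hz
    refine ⟨f j x', ?_, ?_⟩
    · rw [hattr]
      exact mem_iUnion.mpr ⟨j, mem_image_of_mem _ hx'⟩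
    · rw [hLf]
  have hS2 : FC.sumT l {0, α, β, α + β} ⊆ S := by
    refine FC.sumT_sub hl0 hl1 (hKne.image L) hScomp.isClosed ?_
    intro t ht z hz
    have ht' : t = 0 ∨ t = α ∨ t = β ∨ t = α + β := by simpa using ht
    rcases ht' with rfl | rfl | rfl | rfl
    · have := hmemf 0 z hz; rwa [hvals.1] at this
    · have := hmemf 1 z hz; rwa [hvals.2.1] at this
    · have := hmemf 3 z hz; rwa [hvals.2.2.2] at this
    · have := hmemf 2 z hz; rwa [hvals.2.2.1] at this
  have hSeq : S = FC.sumT l {0, α, β, α + β} := Set.Subset.antisymm hS1 hS2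
  obtain ⟨N, A, B, hAB, hrepeq⟩ := FC.rep_sumT4 hl hl' hα hβ
  refine ⟨N, fun j => A j • e, fun j => B j • e, ?_, ?_⟩
  · intro j h
    exact (hAB j).ne (smul_left_injective ℝ hene h)
  · have himg : projH θ 0 '' K = (fun s : ℝ => s • e) '' S := by
      rw [hSdef, ← Set.image_comp]
      exact Set.image_congr (fun x _ => hproj x)
    rw [himg, hSeq, hrepeq, Set.image_iUnion]
    refine Set.iUnion_congr fun j => ?_
    have hfe : (fun s : ℝ => s • e)
        = ⇑((LinearMap.toSpanSingleton ℝ (EuclideanSpace ℝ (Fin 2)) e).toAffineMap) := rfl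
    rw [← segment_eq_Icc (hAB j).le, hfe,
      image_segment ℝ ((LinearMap.toSpanSingleton ℝ (EuclideanSpace ℝ (Fin 2)) e).toAffineMap) (A j) (B j)]
    rfl
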